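/- arXiv:1203.3051 — 4 statements merged into one kernel-verified Lean document; each statement's English description precedes it below -/
import Mathlib

section
/- Let X_1,…,X_k be voting rules and T a tie-breaking mechanism on a finite candidate set C. If at least one X_j satisfies the majority criterion and T satisfies the majority criterion, then the combined rule X_1+⋯+X_k satisfies the majority criterion: for every nonempty S ⊆ C and every profile P on S in which strictly more than half of the votes rank the same candidate w ∈ S first, the combined rule elects w. -/
/-
Framework: a finite candidate set `C`. A vote on a nonempty `S ⊆ C` is a strict
linear order on `S`, encoded as a duplicate-free list enumerating `S` (earlier =
more preferred); a profile on `S` is a finite list of such votes. A voting rule /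
tie-breaking mechanism is a function assigning to every `(S, P)` a candidate,
required to lie in `S` when `S` is nonempty. The combined rule `X_1 + ⋯ + X_k`
(with tie-breaking `T`) is defined by the recursive run-off construction.
-/

variable {C : Type*}

/-- The type of (total) choice functions, used both for voting rules and
tie-breaking mechanisms. -/
abbrev Rule (C : Type*) := Finset C → List (List C) → C

/-- `R` is a genuine voting rule (or tie-breaking mechanism): it always picks a
member of the given nonempty candidate set. -/
def IsRule [DecidableEq C] (R : Rule C) : Prop := ∀ S P, S.Nonempty → R S P ∈ S

/-- `v` is a vote on `S`: a strict linear order of the members of `S`. -/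
def VoteOn [DecidableEq C] (S : Finset C) (v : List C) : Prop := v.Nodup ∧ v.toFinset = S

/-- `P` is a profile on `S`. -/
def ProfileOn [DecidableEq C] (S : Finset C) (P : List (List C)) : Prop := ∀ v ∈ P, VoteOn S v

/-- Restriction `P|_W` of a profile to a subset `W` of candidates. -/
def restrictProfile [DecidableEq C] (W : Finset C) (P : List (List C)) : List (List C) :=
  P.map fun v => v.filter (fun x => x ∈ W)

/-- The combined rule `X_0 + ⋯ + X_k` with tie-breaking mechanism `T`:
collect the set `W` of winners of the base rules; if `W` is a singleton, that
candidate wins; if `W = S`, the tie-breaking mechanism decides; otherwise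
recurse on `(W, P|_W)`. (The final `else` branch is unreachable for genuine
voting rules, since then `W ⊆ S` always holds.) -/
def combined [DecidableEq C] {k : ℕ} (X : Fin (k + 1) → Rule C) (T : Rule C) :
    Finset C → List (List C) → C
  | S, P =>
    let W : Finset C := Finset.image (fun j => X j S P) Finset.univ
    if W.card = 1 then X 0 S P
    else if W = S then T S P
    else if h : W ⊂ S then combined X T W (restrictProfile W P)
    else T S P
  termination_by S _ => S.card
  decreasing_by exact Finset.card_lt_card h

/-- `R` satisfies the majority criterion: whenever strictly more than half of
the votes of a profile on `S` rank the same candidate `w ∈ S` first, `R`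
elects `w`. -/
def MajorityCriterion [DecidableEq C] (R : Rule C) : Prop :=
  ∀ (S : Finset C) (P : List (List C)) (w : C),
    S.Nonempty → ProfileOn S P → w ∈ S →
    2 * (P.filter (fun v => v.head? = some w)).length > P.length → R S P = w

/-- If at least one of the base voting rules satisfies the majority criterion
and the tie-breaking mechanism satisfies the majority criterion, then the
combined rule `X_0 + ⋯ + X_k` satisfies the majority criterion. -/
theorem combined_majority [DecidableEq C] [Fintype C] {k : ℕ}
    (X : Fin (k + 1) → Rule C) (T : Rule C)
    (hX : ∀ j, IsRule (X j)) (hT : IsRule T)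
    (hM : ∃ j, MajorityCriterion (X j)) (hTM : MajorityCriterion T) :
    MajorityCriterion (combined X T) := by
  suffices H : ∀ n (S : Finset C) (P : List (List C)) (w : C), S.card ≤ n →
      S.Nonempty → ProfileOn S P → w ∈ S →
      2 * (P.filter (fun v => v.head? = some w)).length > P.length →
      combined X T S P = w by
    intro S P w hS hP hw hmaj
    exact H S.card S P w le_rfl hS hP hw hmaj
  intro n
  induction n with
  | zero =>
    intro S P w hcard hS
    exfalso
    have := Finset.card_pos.mpr hS
    omega
  | succ n ih =>
    intro S P w hcard hS hP hw hmaj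
    set W : Finset C := Finset.image (fun j => X j S P) Finset.univ with hWdef
    have hWS : W ⊆ S := by
      intro a ha
      simp only [hWdef, Finset.mem_image] at ha
      obtain ⟨j, -, rfl⟩ := ha
      exact hX j S P hS
    have hwW : w ∈ W := by
      obtain ⟨j, hj⟩ := hM
      have := hj S P w hS hP hw hmaj
      simp only [hWdef, Finset.mem_image]
      exact ⟨j, Finset.mem_univ j, this⟩
    rw [combined]
    simp only [← hWdef]
    split_ifs with h1 h2 h3
    · -- W.card = 1
      have h0 : X 0 S P ∈ W := by
        simp only [hWdef, Finset.mem_image]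
        exact ⟨0, Finset.mem_univ 0, rfl⟩
      exact Finset.card_le_one.mp h1.le _ h0 _ hwW
    · -- W = S
      exact hTM S P w hS hP hw hmaj
    · -- W ⊂ S : recurse
      have hlt : W.card < S.card := Finset.card_lt_card h3
      have hProf : ProfileOn W (restrictProfile W P) := by
        intro v' hv'
        simp only [restrictProfile, List.mem_map] at hv'
        obtain ⟨v, hv, rfl⟩ := hv'
        obtain ⟨hnd, htf⟩ := hP v hv
        refine ⟨hnd.filter _, ?_⟩
        rw [List.toFinset_filter, htf]
        ext a
        simp only [Finset.mem_filter, decide_eq_true_eq]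
        exact ⟨fun h => h.2, fun h => ⟨hWS h, h⟩⟩
      have hhead : ∀ v ∈ P, v.head? = some w →
          (v.filter (fun x => x ∈ W)).head? = some w := by
        intro v _ hv
        cases v with
        | nil => simp at hv
        | cons a t =>
          simp only [List.head?_cons, Option.some.injEq] at hv
          subst hv
          rw [List.filter_cons]
          simp [hwW]
      have hcount : (P.filter (fun v => v.head? = some w)).length ≤
          ((restrictProfile W P).filter (fun v => v.head? = some w)).length := by
        simp only [restrictProfile, ← List.countP_eq_length_filter, List.countP_map]
        apply List.countP_mono_left
        intro v hv h
        simp only [Function.comp_apply, decide_eq_true_eq]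
        exact hhead v hv (by simpa using h)
      have hlen : (restrictProfile W P).length = P.length := by
        simp [restrictProfile]
      exact ih W (restrictProfile W P) w (by omega) ⟨w, hwW⟩ hProf hwW (by omega)
    · exact absurd (hWS.ssubset_of_ne h2) h3
end

section
/- Let X_1,…,X_k be voting rules and T a tie-breaking mechanism on a finite candidate set C. If at least one X_j is Condorcet consistent and T is Condorcet consistent, then the combined rule X_1+⋯+X_k is Condorcet consistent: for every nonempty S ⊆ C and every profile P on S having a Condorcet winner w ∈ S (i.e. N_P(w,z) > N_P(z,w) for every z ∈ S∖{w}), the combined rule elects w. -/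
/-
Framework: a finite candidate set `C`. A vote on a nonempty `S ⊆ C` is a strict
linear order on `S`, encoded as a duplicate-free list enumerating `S` (earlier =
more preferred); a profile on `S` is a finite list of such votes. A voting rule /
tie-breaking mechanism is a function assigning to every `(S, P)` a candidate,
required to lie in `S` when `S` is nonempty. The combined rule `X_1 + ⋯ + X_k`
(with tie-breaking `T`) is defined by the recursive run-off construction.
-/

variable {C : Type*}

/-- `N P x y`: the number of votes in `P` ranking `x` above `y`. -/
def pairN [DecidableEq C] (P : List (List C)) (x y : C) : ℕ :=
  (P.filter (fun v => v.idxOf x < v.idxOf y)).length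

/-- `R` is Condorcet consistent: whenever a profile `P` on `S` has a Condorcet
winner `w ∈ S` (i.e. `N_P(w,z) > N_P(z,w)` for every `z ∈ S \ {w}`), `R`
elects `w`. -/
def CondorcetConsistent [DecidableEq C] (R : Rule C) : Prop :=
  ∀ (S : Finset C) (P : List (List C)) (w : C),
    S.Nonempty → ProfileOn S P → w ∈ S →
    (∀ z ∈ S, z ≠ w → pairN P w z > pairN P z w) → R S P = w

lemma filt_indexOf_lt [DecidableEq C] (p : C → Bool) :
    ∀ (l : List C), l.Nodup → ∀ x y : C, x ∈ l → y ∈ l → p x → p y → x ≠ y →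
      ((l.filter p).idxOf x < (l.filter p).idxOf y ↔ l.idxOf x < l.idxOf y) := by
  intro l
  induction l with
  | nil => simp
  | cons a t ih =>
    intro hnd x y hx hy hpx hpy hxy
    rw [List.nodup_cons] at hnd
    by_cases hax : a = x
    · subst hax
      have hya : y ≠ a := fun h => hxy h.symm
      constructor <;> intro _
      · rw [List.idxOf_cons_self, List.idxOf_cons_ne _ hya.symm]
        omega
      · rw [List.filter_cons_of_pos hpx, List.idxOf_cons_self,
          List.idxOf_cons_ne _ hya.symm]
        omega
    · by_cases hay : a = y
      · subst hay
        constructor <;> intro h <;> exfalso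
        · rw [List.filter_cons_of_pos hpy, List.idxOf_cons_self] at h; omega
        · rw [List.idxOf_cons_self] at h; omega
      · have hxt : x ∈ t := by
          cases hx with
          | head => exact absurd rfl hax
          | tail _ h => exact h
        have hyt : y ∈ t := by
          cases hy with
          | head => exact absurd rfl hay
          | tail _ h => exact h
        have hih := ih hnd.2 x y hxt hyt hpx hpy hxy
        rw [List.idxOf_cons_ne _ hax, List.idxOf_cons_ne _ hay]
        by_cases hpa : p a
        · rw [List.filter_cons_of_pos hpa,
            List.idxOf_cons_ne _ hax, List.idxOf_cons_ne _ hay]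
          omega
        · rw [List.filter_cons_of_neg (by simpa using hpa)]
          omega

lemma pairN_restrict [DecidableEq C] (S W : Finset C) (P : List (List C))
    (hP : ProfileOn S P) (hWS : W ⊆ S) (x y : C) (hx : x ∈ W) (hy : y ∈ W) (hxy : x ≠ y) :
    pairN (restrictProfile W P) x y = pairN P x y := by
  unfold pairN restrictProfile
  rw [List.filter_map, List.length_map]
  congr 1
  apply List.filter_congr
  intro v hv
  obtain ⟨hvd, hvS⟩ := hP v hv
  have hxv : x ∈ v := by rw [← List.mem_toFinset, hvS]; exact hWS hx
  have hyv : y ∈ v := by rw [← List.mem_toFinset, hvS]; exact hWS hy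
  simp only [Function.comp_apply, decide_eq_decide]
  exact filt_indexOf_lt _ v hvd x y hxv hyv (by simpa using hx) (by simpa using hy) hxy

lemma profile_restrict [DecidableEq C] {S W : Finset C} {P : List (List C)}
    (hP : ProfileOn S P) (hWS : W ⊆ S) :
    ProfileOn W (restrictProfile W P) := by
  intro v hv
  obtain ⟨u, hu, rfl⟩ := List.mem_map.1 hv
  obtain ⟨hud, huS⟩ := hP u hu
  refine ⟨hud.filter _, ?_⟩
  ext a
  simp only [List.mem_toFinset, List.mem_filter, decide_eq_true_eq]
  constructor
  · rintro ⟨-, h⟩; exact h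
  · intro h
    exact ⟨by rw [← List.mem_toFinset, huS]; exact hWS h, h⟩

lemma combined_aux [DecidableEq C] {k : ℕ} (X : Fin (k + 1) → Rule C) (T : Rule C)
    (hX : ∀ j, IsRule (X j)) (j : Fin (k + 1))
    (hj : CondorcetConsistent (X j)) (hTC : CondorcetConsistent T) :
    ∀ n (S : Finset C) (P : List (List C)) (w : C), S.card ≤ n → S.Nonempty →
      ProfileOn S P → w ∈ S →
      (∀ z ∈ S, z ≠ w → pairN P w z > pairN P z w) → combined X T S P = w := by
  intro n
  induction n with
  | zero =>
    intro S P w hc hS _ _ _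
    have := Finset.card_pos.2 hS
    omega
  | succ n ih =>
    intro S P w hc hS hP hw hcond
    rw [combined]
    set W : Finset C := Finset.image (fun j => X j S P) Finset.univ with hWdef
    have hwW : w ∈ W :=
      Finset.mem_image.2 ⟨j, Finset.mem_univ j, hj S P w hS hP hw hcond⟩
    have hWS : W ⊆ S := by
      intro a ha
      obtain ⟨i, -, rfl⟩ := Finset.mem_image.1 ha
      exact hX i S P hS
    split_ifs with h1 h2 h3
    · obtain ⟨a, haW⟩ := Finset.card_eq_one.1 h1
      have hwa : w = a := by rwa [haW, Finset.mem_singleton] at hwW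
      have : X 0 S P ∈ W := Finset.mem_image.2 ⟨0, Finset.mem_univ 0, rfl⟩
      rw [haW, Finset.mem_singleton] at this
      rw [this, hwa]
    · exact hTC S P w hS hP hw hcond
    · apply ih W (restrictProfile W P) w
      · have := Finset.card_lt_card h3; omega
      · exact ⟨w, hwW⟩
      · exact profile_restrict hP hWS
      · exact hwW
      · intro z hz hzw
        rw [pairN_restrict S W P hP hWS w z hwW hz (fun h => hzw h.symm),
          pairN_restrict S W P hP hWS z w hz hwW hzw]
        exact hcond z (hWS hz) hzw
    · exact absurd (lt_of_le_of_ne hWS h2) h3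

/-- If at least one of the base voting rules is Condorcet consistent and the
tie-breaking mechanism is Condorcet consistent, then the combined rule
`X_0 + ⋯ + X_k` is Condorcet consistent. -/
theorem combined_condorcet [DecidableEq C] [Fintype C] {k : ℕ}
    (X : Fin (k + 1) → Rule C) (T : Rule C)
    (hX : ∀ j, IsRule (X j)) (hT : IsRule T)
    (hC : ∃ j, CondorcetConsistent (X j)) (hTC : CondorcetConsistent T) :
    CondorcetConsistent (combined X T) := by
  obtain ⟨j, hj⟩ := hC
  intro S P w hS hP hw hcond
  exact combined_aux X T hX j hj hTC S.card S P w le_rfl hS hP hw hcond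
end

section
/- The voting-rule combinator satisfies the absorption law (X+Y)+X = X+Y: for all voting rules X and Y and every tie-breaking mechanism T, if the combined rule X+Y (with tie-breaking T) is itself regarded as a voting rule, then the combined rule (X+Y)+X (with the same tie-breaking mechanism T) elects the same winner as X+Y on every nonempty S ⊆ C and every profile P on S. -/
/-
Framework: a finite candidate set `C`. A vote on a nonempty `S ⊆ C` is a strict
linear order on `S`, encoded as a duplicate-free list enumerating `S` (earlier =
more preferred); a profile on `S` is a finite list of such votes. A voting rule /
tie-breaking mechanism is a function assigning to every `(S, P)` a candidate,
required to lie in `S` when `S` is nonempty. The combined rule `X_1 + ⋯ + X_k`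
(with tie-breaking `T`) is defined by the recursive run-off construction.
-/

variable {C : Type*}

lemma combined_eq [DecidableEq C] {k : ℕ} (X : Fin (k + 1) → Rule C) (T : Rule C)
    (S : Finset C) (P : List (List C)) :
    combined X T S P =
      if (Finset.image (fun j => X j S P) Finset.univ).card = 1 then X 0 S P
      else if Finset.image (fun j => X j S P) Finset.univ = S then T S P
      else if _h : Finset.image (fun j => X j S P) Finset.univ ⊂ S then
        combined X T (Finset.image (fun j => X j S P) Finset.univ)
          (restrictProfile (Finset.image (fun j => X j S P) Finset.univ) P)
      else T S P := by
  rw [combined]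

lemma image_pair [DecidableEq C] [Fintype C] (A B : Rule C) (S : Finset C) (P : List (List C)) :
    Finset.image (fun j => (![A, B] : Fin (1+1) → Rule C) j S P) Finset.univ = {A S P, B S P} := by
  ext a
  simp [Fin.exists_fin_two, eq_comm]

lemma profileOn_restrict [DecidableEq C] {S W : Finset C} (hWS : W ⊆ S)
    {P : List (List C)} (hP : ProfileOn S P) : ProfileOn W (restrictProfile W P) := by
  intro v hv
  simp only [restrictProfile, List.mem_map] at hv
  obtain ⟨u, hu, rfl⟩ := hv
  obtain ⟨h1, h2⟩ := hP u hu
  refine ⟨h1.filter _, ?_⟩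
  rw [List.toFinset_filter, h2]
  ext a
  simp only [Finset.mem_filter, decide_eq_true_eq]
  exact ⟨fun h => h.2, fun h => ⟨hWS h, h⟩⟩

lemma combined_mem [DecidableEq C] {k : ℕ} (X : Fin (k + 1) → Rule C) (T : Rule C)
    (hX : ∀ j, IsRule (X j)) (hT : IsRule T) : IsRule (combined X T) := by
  intro S
  induction S using Finset.strongInduction with
  | _ S ih =>
    intro P hS
    rw [combined_eq]
    split_ifs with h1 h2 h3
    · exact hX 0 S P hS
    · exact hT S P hS
    · exact h3.1 (ih _ h3 _ ⟨X 0 S P, Finset.mem_image_of_mem _ (Finset.mem_univ 0)⟩)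
    · exact hT S P hS

lemma absorption_aux [DecidableEq C] [Fintype C]
    (X Y T : Rule C) (hX : IsRule X) (hY : IsRule Y) (hT : IsRule T) :
    ∀ S P, S.Nonempty → ProfileOn S P →
      combined (![combined ![X, Y] T, X] : Fin (1 + 1) → Rule C) T S P
        = combined (![X, Y] : Fin (1 + 1) → Rule C) T S P := by
  intro S
  induction S using Finset.strongInduction with
  | _ S ih =>
    intro P hS hP
    set Z : Rule C := combined ![X, Y] T with hZdef
    have hZrule : IsRule Z := by
      rw [hZdef]
      refine combined_mem _ _ (fun j => ?_) hT
      fin_cases j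
      · exact hX
      · exact hY
    by_cases hzx : Z S P = X S P
    · rw [combined_eq, image_pair]
      have hsing : ({Z S P, X S P} : Finset C) = {X S P} := by rw [hzx]; simp
      rw [hsing, if_pos (Finset.card_singleton _)]
      simp only [Matrix.cons_val_zero]
    · have hXY : X S P ≠ Y S P := by
        intro h
        apply hzx
        rw [hZdef]
        rw [combined_eq, image_pair]
        have hsing : ({X S P, Y S P} : Finset C) = {X S P} := by rw [← h]; simp
        rw [hsing, if_pos (Finset.card_singleton _)]
        simp only [Matrix.cons_val_zero]
      have hcard : ({X S P, Y S P} : Finset C).card = 2 := Finset.card_pair hXY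
      have hWsub : ({X S P, Y S P} : Finset C) ⊆ S := by
        intro a ha
        simp only [Finset.mem_insert, Finset.mem_singleton] at ha
        rcases ha with rfl | rfl
        · exact hX S P hS
        · exact hY S P hS
      have hzS : Z S P ∈ S := hZrule S P hS
      have hcard' : ({Z S P, X S P} : Finset C).card = 2 := Finset.card_pair hzx
      rcases hWsub.ssubset_or_eq with hss | heq
      · have hzrec : Z S P
            = Z {X S P, Y S P} (restrictProfile {X S P, Y S P} P) := by
          conv_lhs => rw [hZdef]
          rw [combined_eq, image_pair, if_neg (by omega), if_neg hss.ne, dif_pos hss]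
        have hzW : Z S P ∈ ({X S P, Y S P} : Finset C) := by
          rw [hzrec]
          exact hZrule _ _ ⟨X S P, by simp⟩
        have hW'eq : ({Z S P, X S P} : Finset C) = {X S P, Y S P} := by
          apply Finset.eq_of_subset_of_card_le
          · intro a ha
            simp only [Finset.mem_insert, Finset.mem_singleton] at ha
            rcases ha with rfl | rfl
            · exact hzW
            · simp
          · omega
        rw [combined_eq, image_pair, hW'eq, if_neg (by omega), if_neg hss.ne, dif_pos hss]
        rw [hzrec]
        exact ih _ hss _ ⟨X S P, by simp⟩ (profileOn_restrict hWsub hP)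
      · have hzT : Z S P = T S P := by
          conv_lhs => rw [hZdef]
          rw [combined_eq, image_pair, if_neg (by omega), if_pos heq]
        have hScard : S.card = 2 := by rw [← heq]; exact hcard
        have hW'eq : ({Z S P, X S P} : Finset C) = S := by
          apply Finset.eq_of_subset_of_card_le
          · intro a ha
            simp only [Finset.mem_insert, Finset.mem_singleton] at ha
            rcases ha with rfl | rfl
            · exact hzS
            · exact hX S P hS
          · omega
        rw [combined_eq, image_pair, hW'eq, if_neg (by omega), if_pos rfl]
        exact hzT.symm

/-- Absorption law `(X + Y) + X = X + Y`: regarding the combined rule `X + Y`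
(with tie-breaking `T`) as itself a voting rule, combining it with `X` (with
the same tie-breaking mechanism `T`) elects the same winner as `X + Y` on
every nonempty `S ⊆ C` and every profile `P` on `S`. -/
theorem combinator_absorption [DecidableEq C] [Fintype C]
    (X Y T : Rule C) (hX : IsRule X) (hY : IsRule Y) (hT : IsRule T)
    (S : Finset C) (P : List (List C)) (hS : S.Nonempty) (hP : ProfileOn S P) :
    combined (![combined ![X, Y] T, X] : Fin (1 + 1) → Rule C) T S P
      = combined (![X, Y] : Fin (1 + 1) → Rule C) T S P :=
  absorption_aux X Y T hX hY hT S P hS hP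
end

section
/- Consider Bucklin voting on the candidate set {a,b,c} with weighted votes and a tie-breaking order T whose T-greatest element is c. Let P be a weighted profile (the non-manipulators) and let w_1,…,w_k be positive manipulator weights. If there exists a choice of manipulator votes v_1,…,v_k which, added to P with weights w_1,…,w_k, makes c the Bucklin winner, then the modified manipulator votes v′_1,…,v′_k, where v′_i is obtained from v_i by moving c to the first position while preserving the relative order of a and b, also make c the Bucklin winner. -/
/-
Weighted voting on the three-candidate set {a, b, c}. A weighted profile is a
finite list of pairs (vote, weight), where a vote is a duplicate-free list of
all three candidates (earlier = more preferred) and the weight is a positive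
natural number. `T` always denotes the tie-breaking (strict linear) order.
-/

inductive Cand : Type
  | a | b | c
  deriving DecidableEq

instance instFintypeCand : Fintype Cand :=
  ⟨{Cand.a, Cand.b, Cand.c}, fun x => by cases x <;> decide⟩

/-- A weighted profile: a list of (vote, weight) pairs. -/
abbrev WProfile := List (List Cand × ℕ)

/-- The total weight `n` of a weighted profile. -/
def totalW (P : WProfile) : ℕ := (P.map Prod.snd).sum

/-- `N P x y`: the total weight of votes in `P` ranking `x` above `y`. -/
def Nw (P : WProfile) (x y : Cand) : ℕ :=
  ((P.filter fun p => p.1.idxOf x < p.1.idxOf y).map Prod.snd).sum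

/-- The `k`-approval score of `e`: the total weight of votes ranking `e`
among the top `k` positions. -/
def kApproval (P : WProfile) (k : ℕ) (e : Cand) : ℕ :=
  ((P.filter fun p => p.1.idxOf e < k).map Prod.snd).sum

/-- The Bucklin score of `e`: the least `k` such that the `k`-approval score
of `e` is strictly greater than half the total weight. -/
noncomputable def bucklinScore (P : WProfile) (e : Cand) : ℕ :=
  sInf {k | totalW P < 2 * kApproval P k e}

/-- `v` is a vote: a strict linear order of all three candidates. -/
def ValidVote (v : List Cand) : Prop := v.Nodup ∧ v.toFinset = Finset.univ

/-- A valid weighted profile: every vote is a linear order and every weight is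
positive. -/
def ValidWProfile (P : WProfile) : Prop := ∀ p ∈ P, ValidVote p.1 ∧ 0 < p.2

/-- The `T`-greatest candidate among the maximisers of `f`. -/
def argmaxT (T : LinearOrder Cand) (f : Cand → ℕ) : Cand :=
  @Finset.max' Cand T (Finset.univ.filter fun e => ∀ z, f z ≤ f e) (by
    obtain ⟨w, hw, hm⟩ := Finset.exists_max_image Finset.univ f ⟨Cand.a, Finset.mem_univ _⟩
    exact ⟨w, Finset.mem_filter.2 ⟨Finset.mem_univ _, fun z => hm z (Finset.mem_univ _)⟩⟩)

/-- The `T`-greatest candidate among the minimisers of `f`. -/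
def argminT (T : LinearOrder Cand) (f : Cand → ℕ) : Cand :=
  @Finset.max' Cand T (Finset.univ.filter fun e => ∀ z, f e ≤ f z) (by
    obtain ⟨w, hw, hm⟩ := Finset.exists_min_image Finset.univ f ⟨Cand.a, Finset.mem_univ _⟩
    exact ⟨w, Finset.mem_filter.2 ⟨Finset.mem_univ _, fun z => hm z (Finset.mem_univ _)⟩⟩)

/-- The plurality score of `e`: the total weight of votes ranking `e` first. -/
def pluralityScore (P : WProfile) (e : Cand) : ℕ :=
  ((P.filter fun p => p.1.head? = some e).map Prod.snd).sum

/-- The plurality winner. -/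
def pluralityWinner (T : LinearOrder Cand) (P : WProfile) : Cand :=
  argmaxT T (pluralityScore P)

/-- The Copeland score of `x`: the number of candidates `z ≠ x` with
`N(x,z) > N(z,x)`. -/
def copelandScore (P : WProfile) (x : Cand) : ℕ :=
  (Finset.univ.filter fun z => z ≠ x ∧ Nw P z x < Nw P x z).card

/-- The Copeland winner. -/
def copelandWinner (T : LinearOrder Cand) (P : WProfile) : Cand :=
  argmaxT T (copelandScore P)

/-- The maximin score of `x`: the minimum of `N(x,z)` over `z ≠ x`. -/
def maximinScore (P : WProfile) (x : Cand) : ℕ :=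
  (((Finset.univ : Finset Cand).erase x).image fun z => Nw P x z).min' (by
    apply Finset.Nonempty.image
    cases x <;> decide)

/-- The maximin winner. -/
def maximinWinner (T : LinearOrder Cand) (P : WProfile) : Cand :=
  argmaxT T (maximinScore P)

/-- The Bucklin winner: the `T`-greatest candidate of minimal Bucklin score. -/
noncomputable def bucklinWinner (T : LinearOrder Cand) (P : WProfile) : Cand :=
  argminT T (bucklinScore P)

/-- Winner of the pairwise contest between `x` and `z` (the `T`-greater
candidate winning on a tie). -/
def pairWin (T : LinearOrder Cand) (P : WProfile) (x z : Cand) : Cand :=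
  if Nw P z x < Nw P x z then x
  else if Nw P x z < Nw P z x then z
  else if T.lt x z then z else x

/-- The candidate other than the two (distinct) given ones. -/
def third (x y : Cand) : Cand :=
  if Cand.a ≠ x ∧ Cand.a ≠ y then Cand.a
  else if Cand.b ≠ x ∧ Cand.b ≠ y then Cand.b
  else Cand.c

/-- The cup winner for the agenda in which `p` and `q` meet first and the
winner then meets the remaining candidate. -/
def cupWinner (T : LinearOrder Cand) (p q : Cand) (P : WProfile) : Cand :=
  pairWin T P (pairWin T P p q) (third p q)

/-- Run-off combination `X + Y`: the common winner if `X` and `Y` agree;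
otherwise the pairwise-majority winner between the two winners, with the
`T`-greater candidate winning a tied run-off. -/
def runoffWinner (T : LinearOrder Cand) (X Y : WProfile → Cand) (P : WProfile) : Cand :=
  let x := X P
  let y := Y P
  if x = y then x
  else if Nw P y x < Nw P x y then x
  else if Nw P x y < Nw P y x then y
  else if T.lt x y then y else x

section Aux

open Cand

lemma vote_enum (v : List Cand) (h : ValidVote v) :
    v = [a,b,c] ∨ v = [a,c,b] ∨ v = [b,a,c] ∨ v = [b,c,a] ∨ v = [c,a,b] ∨ v = [c,b,a] := by
  obtain ⟨hnd, huniv⟩ := h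
  have hlen : v.length = 3 := by
    have := List.toFinset_card_of_nodup hnd
    rw [huniv] at this
    rw [← this]; decide
  obtain ⟨x, y, z, rfl⟩ := List.length_eq_three.1 hlen
  cases x <;> cases y <;> cases z <;> revert hnd huniv <;> decide

lemma vote_valid' (v : List Cand) (h : ValidVote v) :
    ValidVote (c :: v.filter (fun x => x ≠ c)) := by
  rcases vote_enum v h with rfl|rfl|rfl|rfl|rfl|rfl <;> exact ⟨by decide, by decide⟩

lemma vote_indexOf_le (v : List Cand) (h : ValidVote v) (x : Cand) (hx : x ≠ c) :
    v.idxOf x ≤ (c :: v.filter (fun y => y ≠ c)).idxOf x := by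
  rcases vote_enum v h with rfl|rfl|rfl|rfl|rfl|rfl <;> cases x <;> first | decide | simp at hx

lemma kApproval_append (P L : WProfile) (k : ℕ) (e : Cand) :
    kApproval (P ++ L) k e = kApproval P k e + kApproval L k e := by
  simp [kApproval, List.filter_append]

lemma totalW_append (P L : WProfile) : totalW (P ++ L) = totalW P + totalW L := by
  simp [totalW]

lemma kApproval_cons (p : List Cand × ℕ) (L : WProfile) (k : ℕ) (e : Cand) :
    kApproval (p :: L) k e
      = (if p.1.idxOf e < k then p.2 else 0) + kApproval L k e := by
  by_cases h : p.1.idxOf e < k <;> simp [kApproval, List.filter_cons, h]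

lemma kApproval_le_totalW (P : WProfile) (k : ℕ) (e : Cand) :
    kApproval P k e ≤ totalW P := by
  induction P with
  | nil => simp [kApproval, totalW]
  | cons p L ih =>
      rw [kApproval_cons]
      have h2 : totalW (p :: L) = p.2 + totalW L := by simp [totalW]
      rw [h2]
      have : (if p.1.idxOf e < k then p.2 else 0) ≤ p.2 := by split <;> simp
      omega

lemma kApproval_ofFn_le {m : ℕ} (f g : Fin m → List Cand × ℕ)
    (hw : ∀ i, (f i).2 = (g i).2) (k : ℕ) (e : Cand)
    (h : ∀ i, (f i).1.idxOf e < k → (g i).1.idxOf e < k) :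
    kApproval (List.ofFn f) k e ≤ kApproval (List.ofFn g) k e := by
  induction m with
  | zero => simp [kApproval]
  | succ m ih =>
      rw [List.ofFn_succ, List.ofFn_succ, kApproval_cons, kApproval_cons]
      refine Nat.add_le_add ?_ (ih _ _ (fun i => hw _) (fun i => h _))
      split
      · rw [if_pos (h 0 (by assumption))]; exact (hw 0).le
      · simp

lemma totalW_ofFn {m : ℕ} (f g : Fin m → List Cand × ℕ)
    (hw : ∀ i, (f i).2 = (g i).2) :
    totalW (List.ofFn f) = totalW (List.ofFn g) := by
  have : (Prod.snd ∘ f) = (Prod.snd ∘ g) := funext hw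
  simp only [totalW, List.map_ofFn, this]

lemma kApproval_three (P : WProfile) (hP : ValidWProfile P) (e : Cand) :
    kApproval P 3 e = totalW P := by
  have hfil : (P.filter fun p => p.1.idxOf e < 3) = P := by
    rw [List.filter_eq_self]
    intro p hp
    simp only [decide_eq_true_eq]
    obtain ⟨⟨hnd, huniv⟩, -⟩ := hP p hp
    have hlen : p.1.length = 3 := by
      have := List.toFinset_card_of_nodup hnd
      rw [huniv] at this
      rw [← this]; decide
    have he : e ∈ p.1 := by
      rw [← List.mem_toFinset, huniv]; exact Finset.mem_univ _
    have := List.idxOf_lt_length_iff.2 he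
    omega
  unfold kApproval totalW
  rw [hfil]

end Aux

/-- For Bucklin voting with weighted votes on 3 candidates and tie-breaking
order `T` whose `T`-greatest element is `c`: if some manipulator votes
`v₁, …, v_k` (with positive weights `w₁, …, w_k`) added to the profile `P`
make `c` the Bucklin winner, then so do the votes obtained by moving `c` to
the first position of each `vᵢ` while preserving the relative order of `a`
and `b`. -/
theorem bucklin_move_c_first
    (T : LinearOrder Cand) (hT : ∀ x : Cand, T.le x Cand.c)
    (P : WProfile) (hP : ValidWProfile P)
    (k : ℕ) (w : Fin k → ℕ) (hw : ∀ i, 0 < w i)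
    (v : Fin k → List Cand) (hv : ∀ i, ValidVote (v i))
    (hwin : bucklinWinner T (P ++ List.ofFn fun i => (v i, w i)) = Cand.c) :
    bucklinWinner T
      (P ++ List.ofFn fun i => (Cand.c :: (v i).filter (fun x => x ≠ Cand.c), w i))
      = Cand.c := by
  classical
  set Q : WProfile := P ++ List.ofFn fun i => (v i, w i) with hQdef
  set Q' : WProfile := P ++ List.ofFn fun i => (Cand.c :: (v i).filter (fun x => x ≠ Cand.c), w i) with hQ'def
  have hn : totalW Q' = totalW Q := by
    rw [hQdef, hQ'def, totalW_append, totalW_append,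
      totalW_ofFn (fun i => (Cand.c :: (v i).filter (fun x => x ≠ Cand.c), w i))
        (fun i => (v i, w i)) (fun i => rfl)]
  have hQ : ValidWProfile Q := by
    intro p hp
    rcases List.mem_append.1 hp with hp | hp
    · exact hP p hp
    · rw [List.mem_ofFn] at hp
      obtain ⟨i, rfl⟩ := hp
      exact ⟨hv i, hw i⟩
  have hQ' : ValidWProfile Q' := by
    intro p hp
    rcases List.mem_append.1 hp with hp | hp
    · exact hP p hp
    · rw [List.mem_ofFn] at hp
      obtain ⟨i, rfl⟩ := hp
      exact ⟨vote_valid' (v i) (hv i), hw i⟩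
  have hAc : ∀ k', kApproval Q k' Cand.c ≤ kApproval Q' k' Cand.c := by
    intro k'
    rw [hQdef, hQ'def, kApproval_append, kApproval_append]
    refine Nat.add_le_add_left
      (kApproval_ofFn_le (fun i => (v i, w i))
        (fun i => (Cand.c :: (v i).filter (fun x => x ≠ Cand.c), w i))
        (fun i => rfl) k' Cand.c ?_) _
    intro i hi
    simp only [List.idxOf_cons_self]
    exact Nat.lt_of_le_of_lt (Nat.zero_le _) hi
  have hAz : ∀ z, z ≠ Cand.c → ∀ k', kApproval Q' k' z ≤ kApproval Q k' z := by
    intro z hz k'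
    rw [hQdef, hQ'def, kApproval_append, kApproval_append]
    refine Nat.add_le_add_left
      (kApproval_ofFn_le (fun i => (Cand.c :: (v i).filter (fun x => x ≠ Cand.c), w i))
        (fun i => (v i, w i)) (fun i => rfl) k' z ?_) _
    intro i hi
    exact Nat.lt_of_le_of_lt (vote_indexOf_le (v i) (hv i) z hz) hi
  letI := T
  have hmin : ∀ z, bucklinScore Q Cand.c ≤ bucklinScore Q z := by
    have hc' : Cand.c ∈ Finset.univ.filter
        (fun e => ∀ z, bucklinScore Q e ≤ bucklinScore Q z) := by
      have hne : (Finset.univ.filter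
          (fun e => ∀ z, bucklinScore Q e ≤ bucklinScore Q z)).Nonempty := by
        obtain ⟨x, hx, hm⟩ := Finset.exists_min_image Finset.univ (bucklinScore Q)
          ⟨Cand.a, Finset.mem_univ _⟩
        exact ⟨x, Finset.mem_filter.2 ⟨Finset.mem_univ _, fun z => hm z (Finset.mem_univ _)⟩⟩
      rw [← hwin]
      exact Finset.max'_mem _ hne
    exact (Finset.mem_filter.1 hc').2
  have key : ∀ z, bucklinScore Q' Cand.c ≤ bucklinScore Q' z := by
    by_cases hn0 : totalW Q = 0
    · intro z
      have h0 : bucklinScore Q' Cand.c = 0 := by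
        unfold bucklinScore
        have hemp : {k' | totalW Q' < 2 * kApproval Q' k' Cand.c} = ∅ := by
          ext k'
          simp only [Set.mem_setOf_eq, Set.mem_empty_iff_false, iff_false, not_lt]
          have := kApproval_le_totalW Q' k' Cand.c
          omega
        rw [hemp, Nat.sInf_empty]
      rw [h0]
      exact Nat.zero_le _
    · have hpos : 0 < totalW Q := Nat.pos_of_ne_zero hn0
      intro z
      by_cases hz : z = Cand.c
      · subst hz; exact le_refl _
      have s1 : bucklinScore Q' Cand.c ≤ bucklinScore Q Cand.c := by
        have hne : {k' | totalW Q < 2 * kApproval Q k' Cand.c}.Nonempty := by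
          refine ⟨3, ?_⟩
          simp only [Set.mem_setOf_eq, kApproval_three Q hQ]
          omega
        have hm : totalW Q < 2 * kApproval Q (bucklinScore Q Cand.c) Cand.c :=
          Nat.sInf_mem hne
        apply Nat.sInf_le
        show totalW Q' < 2 * kApproval Q' (bucklinScore Q Cand.c) Cand.c
        have h2 := hAc (bucklinScore Q Cand.c)
        omega
      have s2 : bucklinScore Q z ≤ bucklinScore Q' z := by
        have hne : {k' | totalW Q' < 2 * kApproval Q' k' z}.Nonempty := by
          refine ⟨3, ?_⟩
          simp only [Set.mem_setOf_eq, kApproval_three Q' hQ']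
          omega
        have hm : totalW Q' < 2 * kApproval Q' (bucklinScore Q' z) z :=
          Nat.sInf_mem hne
        apply Nat.sInf_le
        show totalW Q < 2 * kApproval Q (bucklinScore Q' z) z
        have h2 := hAz z hz (bucklinScore Q' z)
        omega
      exact s1.trans ((hmin z).trans s2)
  show bucklinWinner T Q' = Cand.c
  unfold bucklinWinner argminT
  have hcs : Cand.c ∈ Finset.univ.filter
      (fun e => ∀ z, bucklinScore Q' e ≤ bucklinScore Q' z) :=
    Finset.mem_filter.2 ⟨Finset.mem_univ _, key⟩
  exact le_antisymm (Finset.max'_le _ _ _ (fun y _ => hT y)) (Finset.le_max' _ _ hcs)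
end
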